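/- Every nontrivial element of a free group fails to have a t-th root for some t > 1: for every type ι and every g ∈ FreeGroup ι with g ≠ 1, there exists a natural number t > 1 such that h^t ≠ g for all h ∈ FreeGroup ι. -/

import Mathlib

namespace FreeGroupRootAux

open List

variable {α : Type*} [DecidableEq α]

/-- The "no cancellation" relation between adjacent letters. -/
def P (x y : α × Bool) : Prop := ¬(x.1 = y.1 ∧ x.2 = !y.2)

lemma reduce_eq_self_of_chain' {L : List (α × Bool)} (h : List.Chain' P L) :
    FreeGroup.reduce L = L := by
  induction L with
  | nil => rfl
  | cons x L ih =>
    rw [List.Chain', List.isChain_cons] at h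
    obtain ⟨h1, h2⟩ := h
    rw [FreeGroup.reduce.cons, ih h2]
    cases L with
    | nil => rfl
    | cons y L' =>
      simp only
      rw [if_neg (h1 y rfl)]

lemma chain'_of_reduce_eq_self {L : List (α × Bool)} (h : FreeGroup.reduce L = L) :
    List.Chain' P L := by
  induction L with
  | nil => simp [List.Chain']
  | cons x L ih =>
    rw [FreeGroup.reduce.cons] at h
    have hlen : (FreeGroup.reduce L).length ≤ L.length :=
      (FreeGroup.reduce.red (L := L)).length_le
    cases hr : FreeGroup.reduce L with
    | nil =>
      rw [hr] at h
      simp only at h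
      have hL : L = [] := by injection h with _ h2; exact h2.symm
      subst hL
      simp [List.Chain']
    | cons hd tl =>
      rw [hr] at h hlen
      simp only [List.length_cons] at hlen
      simp only at h
      by_cases hc : x.1 = hd.1 ∧ x.2 = !hd.2
      · rw [if_pos hc] at h
        have := congrArg List.length h
        simp only [List.length_cons] at this
        omega
      · rw [if_neg hc] at h
        have hL : hd :: tl = L := by injection h
        have hred : FreeGroup.reduce L = L := by rw [hr, hL]
        have hch := ih hred
        rw [List.Chain', List.isChain_cons]
        refine ⟨?_, hch⟩
        intro y hy
        rw [← hL] at hy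
        simp at hy
        subst hy
        exact hc

lemma chain'_toWord (x : FreeGroup α) : List.Chain' P x.toWord :=
  chain'_of_reduce_eq_self (FreeGroup.reduce_toWord x)

omit [DecidableEq α] in
lemma invRev_cons (x : α × Bool) (L : List (α × Bool)) :
    FreeGroup.invRev (x :: L) = FreeGroup.invRev L ++ [(x.1, !x.2)] := by
  simp [FreeGroup.invRev]

omit [DecidableEq α] in
lemma head?_flatten_replicate {W : List (α × Bool)} (hW : W ≠ []) {t : ℕ} (ht : t ≠ 0) :
    (List.flatten (List.replicate t W)).head? = W.head? := by
  cases t with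
  | zero => exact absurd rfl ht
  | succ n =>
    rw [List.replicate_succ, List.flatten_cons, List.head?_append_of_ne_nil _ hW]

omit [DecidableEq α] in
lemma getLast?_flatten_replicate {W : List (α × Bool)} (hW : W ≠ []) {t : ℕ} (ht : t ≠ 0) :
    (List.flatten (List.replicate t W)).getLast? = W.getLast? := by
  cases t with
  | zero => exact absurd rfl ht
  | succ n =>
    rw [List.replicate_succ', List.flatten_append, List.flatten_cons, List.flatten_nil,
      List.append_nil, List.getLast?_append]
    cases h : W.getLast? with
    | none => exact absurd (List.getLast?_eq_none_iff.mp h) hW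
    | some a => rfl

omit [DecidableEq α] in
lemma chain'_flatten_replicate {W : List (α × Bool)} (hW : List.Chain' P W)
    (hjunc : ∀ a ∈ W.getLast?, ∀ b ∈ W.head?, P a b) (t : ℕ) :
    List.Chain' P (List.flatten (List.replicate t W)) := by
  induction t with
  | zero => simp [List.Chain']
  | succ n ih =>
    rw [List.replicate_succ, List.flatten_cons, List.Chain', List.isChain_append]
    refine ⟨hW, ih, ?_⟩
    intro a ha b hb
    rcases Nat.eq_zero_or_pos n with hn | hn
    · subst hn; simp at hb
    · by_cases hWnil : W = []
      · subst hWnil; simp at ha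
      · rw [head?_flatten_replicate hWnil hn.ne'] at hb
        exact hjunc a ha b hb

/-- Cyclic reduction: every nontrivial element decomposes as a reduced word
`c.toWord ++ k.toWord ++ invRev c.toWord` with `k` cyclically reduced. -/
lemma exists_decomp : ∀ n (h : FreeGroup α), h.toWord.length = n → h ≠ 1 →
    ∃ c k : FreeGroup α, k ≠ 1 ∧
      h.toWord = c.toWord ++ k.toWord ++ FreeGroup.invRev c.toWord ∧
      ∀ a ∈ k.toWord.getLast?, ∀ b ∈ k.toWord.head?, P a b := by
  intro n
  induction n using Nat.strong_induction_on with
  | _ n ih =>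
    intro h hlen hne
    have hWnil : h.toWord ≠ [] := fun hnil => hne (FreeGroup.toWord_eq_nil_iff.mp hnil)
    set W := h.toWord with hW
    by_cases hok : ∀ a ∈ W.getLast?, ∀ b ∈ W.head?, P a b
    · exact ⟨1, h, hne, by simp [FreeGroup.invRev, hW], hok⟩
    · -- the word cancels cyclically: W = b :: M ++ [(b.1, !b.2)]
      push_neg at hok
      obtain ⟨a, ha, b, hb, hab⟩ := hok
      rw [P, not_not] at hab
      obtain ⟨I, haI⟩ : ∃ I, W = I ++ [a] := by
        refine ⟨W.dropLast, ?_⟩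
        have := List.dropLast_append_getLast hWnil
        rw [List.getLast?_eq_getLast hWnil] at ha
        simp only [Option.mem_def, Option.some.injEq] at ha
        rw [ha] at this
        exact this.symm
      have hInil : I ≠ [] := by
        rintro rfl
        simp only [List.nil_append] at haI
        rw [haI] at hb
        simp at hb
        rw [hb] at hab
        simp at hab
      have hbI : b ∈ I.head? := by
        rw [haI, List.head?_append_of_ne_nil _ hInil] at hb
        exact hb
      obtain ⟨M, hbM⟩ : ∃ M, I = b :: M := ⟨I.tail, (List.cons_head?_tail hbI).symm⟩
      have hay : a = (b.1, !b.2) := by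
        obtain ⟨h1, h2⟩ := hab
        rw [Prod.ext_iff]
        exact ⟨h1, by simp [h2]⟩
      have hWdecomp : W = b :: (M ++ [a]) := by rw [haI, hbM]; simp
      have hchW : List.Chain' P W := by rw [hW]; exact chain'_toWord h
      have hchM : List.Chain' P M :=
        hchW.infix ⟨[b], [a], by rw [hWdecomp]; simp⟩
      have hMred : FreeGroup.reduce M = M := reduce_eq_self_of_chain' hchM
      set k₀ : FreeGroup α := FreeGroup.mk M with hk₀
      have hk₀W : k₀.toWord = M := by rw [hk₀, FreeGroup.toWord_mk, hMred]
      -- h = mk [b] * k₀ * (mk [b])⁻¹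
      have hconj : h = FreeGroup.mk [b] * k₀ * (FreeGroup.mk [b])⁻¹ := by
        rw [FreeGroup.inv_mk, hk₀, FreeGroup.mul_mk, FreeGroup.mul_mk]
        have hiR : FreeGroup.invRev [b] = [(b.1, !b.2)] := by simp [FreeGroup.invRev]
        rw [hiR, ← hay]
        have : [b] ++ M ++ [a] = W := by rw [hWdecomp]; simp
        rw [this, hW, FreeGroup.mk_toWord]
      have hk₀ne : k₀ ≠ 1 := by
        rintro h1
        rw [h1, mul_one, mul_inv_cancel] at hconj
        exact hne hconj
      have hk₀len : k₀.toWord.length < n := by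
        rw [hk₀W, ← hlen, hWdecomp]
        simp only [List.length_cons, List.length_append, List.length_singleton]
        omega
      obtain ⟨c', k, hkne, hdec, hjunc⟩ := ih _ hk₀len k₀ rfl hk₀ne
      rw [hk₀W] at hdec
      -- new conjugator: mk (b :: c'.toWord)
      have hchc' : List.Chain' P (b :: c'.toWord) := by
        rw [List.Chain', List.isChain_cons]
        refine ⟨?_, chain'_toWord c'⟩
        intro y hy
        have hc'nil : c'.toWord ≠ [] := by
          rintro hcn
          rw [hcn] at hy; simp at hy
        have hMnil : M ≠ [] := by
          rw [hdec]
          simp [hc'nil]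
        have hyM : M.head? = some y := by
          rw [hdec, List.append_assoc, List.head?_append_of_ne_nil _ hc'nil]
          exact hy
        have hhead := (List.isChain_cons.mp (hWdecomp ▸ hchW)).1
        apply hhead
        rw [List.head?_append_of_ne_nil _ hMnil, hyM]
        rfl
      set c : FreeGroup α := FreeGroup.mk (b :: c'.toWord) with hc
      have hcW : c.toWord = b :: c'.toWord := by
        rw [hc, FreeGroup.toWord_mk, reduce_eq_self_of_chain' hchc']
      refine ⟨c, k, hkne, ?_, hjunc⟩
      rw [hWdecomp, hcW, invRev_cons, hdec, ← hay]
      simp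

lemma norm_pow_ge {h : FreeGroup α} (hne : h ≠ 1) (t : ℕ) :
    t ≤ FreeGroup.norm (h ^ t) := by
  rcases Nat.eq_zero_or_pos t with rfl | ht
  · simp
  obtain ⟨c, k, hkne, hdec, hjunc⟩ := exists_decomp h.toWord.length h rfl hne
  have hWknil : k.toWord ≠ [] := fun hnil => hkne (FreeGroup.toWord_eq_nil_iff.mp hnil)
  have htne : t ≠ 0 := ht.ne'
  have hmk1 : FreeGroup.mk (c.toWord ++ k.toWord ++ FreeGroup.invRev c.toWord)
      = c * k * c⁻¹ := by
    rw [← FreeGroup.mul_mk, ← FreeGroup.mul_mk, ← FreeGroup.inv_mk]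
    simp only [FreeGroup.mk_toWord]
  have hh : h = c * k * c⁻¹ := by
    rw [← hmk1, ← hdec, FreeGroup.mk_toWord]
  have hmk2 : FreeGroup.mk (c.toWord ++ (List.replicate t k.toWord).flatten
      ++ FreeGroup.invRev c.toWord) = c * k ^ t * c⁻¹ := by
    rw [← FreeGroup.mul_mk, ← FreeGroup.mul_mk, ← FreeGroup.inv_mk, ← FreeGroup.pow_mk]
    simp only [FreeGroup.mk_toWord]
  have hpow : h ^ t = FreeGroup.mk (c.toWord ++ (List.replicate t k.toWord).flatten
      ++ FreeGroup.invRev c.toWord) := by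
    rw [hh, conj_pow, ← hmk2]
  -- the big word is reduced
  have hchW : List.Chain' P (h.toWord) := chain'_toWord h
  rw [hdec] at hchW
  rw [List.append_assoc, List.Chain', List.isChain_append] at hchW
  obtain ⟨hchU, hchrest, hjUr⟩ := hchW
  rw [List.isChain_append] at hchrest
  obtain ⟨hchWk, hchinv, hjWkinv⟩ := hchrest
  have hbig : List.Chain' P (c.toWord ++ (List.replicate t k.toWord).flatten
      ++ FreeGroup.invRev c.toWord) := by
    rw [List.append_assoc, List.Chain', List.isChain_append]
    refine ⟨hchU, ?_, ?_⟩
    · rw [List.isChain_append]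
      refine ⟨chain'_flatten_replicate hchWk hjunc t, hchinv, ?_⟩
      intro a ha b hb
      rw [getLast?_flatten_replicate hWknil htne] at ha
      exact hjWkinv a ha b hb
    · intro a ha b hb
      rw [List.head?_append_of_ne_nil] at hb
      · rw [head?_flatten_replicate hWknil htne] at hb
        apply hjUr a ha b
        rw [List.head?_append_of_ne_nil _ hWknil]
        exact hb
      · intro hnil
        rw [List.flatten_eq_nil_iff] at hnil
        exact hWknil (hnil k.toWord (by simp [List.mem_replicate, htne]))
  have hnorm : FreeGroup.norm (h ^ t) = (c.toWord ++ (List.replicate t k.toWord).flatten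
      ++ FreeGroup.invRev c.toWord).length := by
    rw [hpow, FreeGroup.norm, FreeGroup.toWord_mk, reduce_eq_self_of_chain' hbig]
  rw [hnorm, List.length_append, List.length_append]
  have h1 : 1 ≤ k.toWord.length := List.length_pos_iff.mpr hWknil
  have h2 : ((List.replicate t k.toWord).flatten).length = t * k.toWord.length := by
    simp [List.length_flatten, List.map_replicate, Nat.mul_comm]
  have h3 : t ≤ t * k.toWord.length := Nat.le_mul_of_pos_right t (by omega)
  omega

end FreeGroupRootAux

/-- Every nontrivial element of a free group fails to have a `t`-th root for some
`t > 1`. -/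
theorem freeGroup_exists_no_root (ι : Type*) (g : FreeGroup ι) (hg : g ≠ 1) :
    ∃ t : ℕ, 1 < t ∧ ∀ h : FreeGroup ι, h ^ t ≠ g := by
  classical
  have hgnorm : 1 ≤ FreeGroup.norm g := by
    rcases Nat.eq_zero_or_pos (FreeGroup.norm g) with h0 | h1
    · exact absurd (FreeGroup.norm_eq_zero.mp h0) hg
    · exact h1
  refine ⟨FreeGroup.norm g + 1, by omega, ?_⟩
  intro h heq
  by_cases hne : h = 1
  · subst hne; simp at heq; exact hg heq.symm
  · have := FreeGroupRootAux.norm_pow_ge hne (FreeGroup.norm g + 1)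
    rw [heq] at this
    omega
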